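/- Let V ⊆ ℝⁿ be open convex and G a manifold. For k ≥ 1 define (δ_K^{−1})^k on Hom_{A^e}(K_k, Diffop(V×G)) by (δ_K^{−1})^k ψ = (1/(k+r)) (δ_K^*)^k ψ on the component where ψ has values of V-degree r (and 0 when k = r = 0). Then δ_K^{k−1}∘(δ_K^{−1})^k + (δ_K^{−1})^{k+1}∘δ_K^k = id for all k ≥ 1; hence the cohomology of the complex Hom_{A^e}(K_•, Diffop(V×G)) vanishes in all degrees k ≥ 1. -/

import Mathlib

open Finset

namespace KoszulHomotopyDeg

variable {𝒜 : Type*} [Ring 𝒜] [Algebra ℂ 𝒜] {n : ℕ}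

/-- The Koszul cochain differential `δ_K` (values on basis wedges; the `A^e`-action of
`ξ^j = x^j⊗1 - 1⊗x^j` on a value `D` is `X j * D - D * X j`). -/
def dK (X : Fin n → 𝒜) (k : ℕ) (ψ : (Fin k → Fin n) → 𝒜) :
    (Fin (k + 1) → Fin n) → 𝒜 := fun I =>
  ∑ m : Fin (k + 1), (-1 : ℤ) ^ (m : ℕ) •
    (X (I m) * ψ (I ∘ m.succAbove) - ψ (I ∘ m.succAbove) * X (I m))

/-- `(δ_K^* ψ)(α) = -∑_j ψ(e^j ∧ α) ∘ ∂/∂x^j`. -/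
def dKstar (P : Fin n → 𝒜) (k : ℕ) (ψ : (Fin (k + 1) → Fin n) → 𝒜) :
    (Fin k → Fin n) → 𝒜 := fun I =>
  - ∑ j : Fin n, ψ (Fin.cons j I) * P j

/-- The degree operator `deg D = ∑_j ((D·x^j) - (x^j·D))∘∂/∂x^j` counting the number of
derivatives in the `V`-directions. -/
def degOp (X P : Fin n → 𝒜) (D : 𝒜) : 𝒜 :=
  ∑ j, (D * X j - X j * D) * P j

/-- The homotopy `(δ_K^{-1})^{k+1} ψ = ∑_r (k+1+r)⁻¹ (δ_K^*)(π_r ∘ ψ)`, where `π_r` projects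
the values onto their homogeneous component of `V`-degree `r`. -/
noncomputable def dKinv (P : Fin n → 𝒜) (π : ℕ → 𝒜 →ₗ[ℂ] 𝒜) (k : ℕ)
    (ψ : (Fin (k + 1) → Fin n) → 𝒜) : (Fin k → Fin n) → 𝒜 := fun I =>
  ∑ᶠ r : ℕ, (((k + 1 + r : ℕ) : ℂ))⁻¹ • dKstar P k (fun J => π r (ψ J)) I

def Alternating (k : ℕ) (ψ : (Fin k → Fin n) → 𝒜) : Prop :=
  ∀ (I : Fin k → Fin n) (σ : Equiv.Perm (Fin k)),
    ψ (I ∘ σ) = (Equiv.Perm.sign σ : ℤ) • ψ I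

lemma termA (a p x e : 𝒜) (h : p * x - x * p = e) :
    ((a * p) * x - x * (a * p)) + ((x * a - a * x) * p) = a * e := by
  have key : (((a * p) * x - x * (a * p)) + ((x * a - a * x) * p)) - a * e
      = a * ((p * x - x * p) - e) := by noncomm_ring
  have h0 : (p * x - x * p) - e = 0 := by rw [h, sub_self]
  rw [h0, mul_zero] at key
  exact sub_eq_zero.mp key

lemma cons_self_eq_comp_cycleRange {α : Type*} {k : ℕ} (I : Fin (k + 1) → α) (m : Fin (k + 1)) :
    (Fin.cons (I m) (I ∘ m.succAbove) : Fin (k + 1) → α) = I ∘ ⇑(m.cycleRange⁻¹) := by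
  have h1 : ∀ x, (Fin.cons (I m) (I ∘ m.succAbove) : Fin (k + 1) → α) (m.cycleRange x) = I x := by
    intro x
    refine Fin.succAboveCases m ?_ ?_ x
    · rw [Fin.cycleRange_self]; exact Fin.cons_zero _ _
    · intro j; rw [Fin.cycleRange_succAbove, Fin.cons_succ]; rfl
  funext x
  have := h1 (m.cycleRange⁻¹ x)
  rwa [Equiv.Perm.inv_def, Equiv.apply_symm_apply] at this

lemma alt_cons (k : ℕ) (ψ : (Fin (k + 1) → Fin n) → 𝒜) (hψ : Alternating (k + 1) ψ)
    (I : Fin (k + 1) → Fin n) (m : Fin (k + 1)) :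
    ψ (Fin.cons (I m) (I ∘ m.succAbove)) = (-1 : ℤ) ^ (m : ℕ) • ψ I := by
  rw [cons_self_eq_comp_cycleRange, hψ I (m.cycleRange⁻¹)]
  congr 1
  rw [map_inv, Fin.sign_cycleRange]
  simp

lemma homotopy_raw (X P : Fin n → 𝒜)
    (hXP : ∀ i j, P i * X j - X j * P i = if i = j then 1 else 0)
    (k : ℕ) (ψ : (Fin (k + 1) → Fin n) → 𝒜) (hψ : Alternating (k + 1) ψ)
    (I : Fin (k + 1) → Fin n) :
    dK X k (dKstar P k ψ) I + dKstar P (k + 1) (dK X (k + 1) ψ) I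
      = degOp X P (ψ I) + (k + 1) • ψ I := by
  have hc0 : ∀ j : Fin n, (Fin.cons j I ∘ (0 : Fin (k + 2)).succAbove) = I := by
    intro j; funext i; simp [Fin.zero_succAbove, Fin.cons_succ]
  have hcs : ∀ (j : Fin n) (m : Fin (k + 1)),
      (Fin.cons j I) ∘ (m.succ).succAbove = Fin.cons j (I ∘ m.succAbove) := by
    intro j m; funext i
    refine Fin.cases ?_ ?_ i
    · simp
    · intro i'; simp [Fin.succ_succAbove_succ, Fin.cons_succ]
  have e1 : dK X k (dKstar P k ψ) I
      = ∑ m : Fin (k + 1), ∑ j, (-1 : ℤ) ^ (m : ℕ) •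
          ((ψ (Fin.cons j (I ∘ m.succAbove)) * P j) * X (I m)
            - X (I m) * (ψ (Fin.cons j (I ∘ m.succAbove)) * P j)) := by
    simp only [dK, dKstar]
    refine Finset.sum_congr rfl fun m _ => ?_
    rw [mul_neg, neg_mul, sub_neg_eq_add, neg_add_eq_sub, Finset.sum_mul, Finset.mul_sum,
      ← Finset.sum_sub_distrib, Finset.smul_sum]
  have hj : ∀ j : Fin n,
      dK X (k + 1) ψ (Fin.cons j I)
      = (X j * ψ I - ψ I * X j)
        + ∑ m : Fin (k + 1), (-((-1 : ℤ) ^ (m : ℕ))) •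
            (X (I m) * ψ (Fin.cons j (I ∘ m.succAbove))
              - ψ (Fin.cons j (I ∘ m.succAbove)) * X (I m)) := by
    intro j
    simp only [dK]
    rw [Fin.sum_univ_succ]
    congr 1
    · have h : (Fin.cons j I ∘ Fin.succ : Fin (k + 1) → Fin n) = I := by
        funext i; simp
      simp [h]
    · refine Finset.sum_congr rfl fun m _ => ?_
      rw [hcs j m, Fin.cons_succ, Fin.val_succ, pow_succ, mul_neg_one]
  have step1 : ∀ j : Fin n, -(dK X (k + 1) ψ (Fin.cons j I) * P j)
      = (ψ I * X j - X j * ψ I) * P j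
        + ∑ m : Fin (k + 1), (-1 : ℤ) ^ (m : ℕ) •
            ((X (I m) * ψ (Fin.cons j (I ∘ m.succAbove))
              - ψ (Fin.cons j (I ∘ m.succAbove)) * X (I m)) * P j) := by
    intro j
    rw [hj j, add_mul, neg_add, ← neg_mul, neg_sub, Finset.sum_mul]
    congr 1
    rw [← Finset.sum_neg_distrib]
    exact Finset.sum_congr rfl fun m _ => by rw [smul_mul_assoc, neg_smul, neg_neg]
  have e2 : dKstar P (k + 1) (dK X (k + 1) ψ) I
      = (∑ j, (ψ I * X j - X j * ψ I) * P j)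
        + ∑ m : Fin (k + 1), ∑ j, (-1 : ℤ) ^ (m : ℕ) •
            ((X (I m) * ψ (Fin.cons j (I ∘ m.succAbove))
              - ψ (Fin.cons j (I ∘ m.succAbove)) * X (I m)) * P j) := by
    simp only [dKstar]
    rw [← Finset.sum_neg_distrib, Finset.sum_congr rfl fun j _ => step1 j,
      Finset.sum_add_distrib]
    congr 1
    exact Finset.sum_comm
  have key : (∑ m : Fin (k + 1), ∑ j, (-1 : ℤ) ^ (m : ℕ) •
          ((ψ (Fin.cons j (I ∘ m.succAbove)) * P j) * X (I m)
            - X (I m) * (ψ (Fin.cons j (I ∘ m.succAbove)) * P j)))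
      + (∑ m : Fin (k + 1), ∑ j, (-1 : ℤ) ^ (m : ℕ) •
            ((X (I m) * ψ (Fin.cons j (I ∘ m.succAbove))
              - ψ (Fin.cons j (I ∘ m.succAbove)) * X (I m)) * P j))
      = (k + 1) • ψ I := by
    rw [← Finset.sum_add_distrib]
    have hm : ∀ m : Fin (k + 1),
        (∑ j, (-1 : ℤ) ^ (m : ℕ) •
          ((ψ (Fin.cons j (I ∘ m.succAbove)) * P j) * X (I m)
            - X (I m) * (ψ (Fin.cons j (I ∘ m.succAbove)) * P j)))
        + (∑ j, (-1 : ℤ) ^ (m : ℕ) •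
            ((X (I m) * ψ (Fin.cons j (I ∘ m.succAbove))
              - ψ (Fin.cons j (I ∘ m.succAbove)) * X (I m)) * P j))
        = ψ I := by
      intro m
      rw [← Finset.sum_add_distrib]
      have : ∀ j : Fin n, ((-1 : ℤ) ^ (m : ℕ) •
          ((ψ (Fin.cons j (I ∘ m.succAbove)) * P j) * X (I m)
            - X (I m) * (ψ (Fin.cons j (I ∘ m.succAbove)) * P j)))
        + ((-1 : ℤ) ^ (m : ℕ) •
            ((X (I m) * ψ (Fin.cons j (I ∘ m.succAbove))
              - ψ (Fin.cons j (I ∘ m.succAbove)) * X (I m)) * P j))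
        = (-1 : ℤ) ^ (m : ℕ) •
            (if j = I m then ψ (Fin.cons j (I ∘ m.succAbove)) else 0) := by
        intro j
        rw [← smul_add, termA _ _ _ _ (hXP j (I m)), mul_ite, mul_one, mul_zero]
      rw [Finset.sum_congr rfl fun j _ => this j, ← Finset.smul_sum,
        Finset.sum_ite_eq' Finset.univ (I m)
          (fun j => ψ (Fin.cons j (I ∘ m.succAbove))), if_pos (Finset.mem_univ _),
        alt_cons k ψ hψ I m, smul_smul, ← pow_add]
      rw [Even.neg_one_pow ⟨(m : ℕ), rfl⟩, one_smul]
    rw [Finset.sum_congr rfl fun m _ => hm m, Finset.sum_const, Finset.card_univ,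
      Fintype.card_fin]
  rw [e1, e2, degOp, ← key]
  abel

set_option linter.unusedSectionVars false

/-! ### Auxiliary ring identities -/

lemma termE (x xi p d e : 𝒜) (h1 : x * xi = xi * x) (h2 : p * x - x * p = e) :
    ((x * d - d * x) * xi - xi * (x * d - d * x)) * p
      = x * ((d * xi - xi * d) * p) - ((d * xi - xi * d) * p) * x + (d * xi - xi * d) * e := by
  have key : (((x * d - d * x) * xi - xi * (x * d - d * x)) * p)
      - (x * ((d * xi - xi * d) * p) - ((d * xi - xi * d) * p) * x + (d * xi - xi * d) * e)
      = -(d * (xi * ((x * p) - (p * x - e)))) - d * ((x * xi - xi * x) * p)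
        + (x * xi - xi * x) * (d * p) + xi * (d * ((x * p) - (p * x - e))) := by
    noncomm_ring
  have ha : x * xi - xi * x = 0 := by rw [h1, sub_self]
  have hb : (x * p) - (p * x - e) = 0 := by rw [← h2]; abel
  rw [ha, hb] at key
  simp only [mul_zero, zero_mul, neg_zero, add_zero, zero_add, sub_zero] at key
  exact sub_eq_zero.mp key

/-! ### Alternating functions and the cyclic rotation -/

lemma alt_pi (π : ℕ → 𝒜 →ₗ[ℂ] 𝒜) (k : ℕ) (ψ : (Fin k → Fin n) → 𝒜)
    (hψ : Alternating k ψ) (r : ℕ) :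
    Alternating k (fun J => π r (ψ J)) := by
  intro I σ
  simp only
  rw [hψ I σ, map_zsmul]

lemma alt_dKstar (P : Fin n → 𝒜) (k : ℕ) (ψ : (Fin (k + 1) → Fin n) → 𝒜)
    (hψ : Alternating (k + 1) ψ) : Alternating k (dKstar P k ψ) := by
  intro I σ
  simp only [dKstar]
  have hcons : ∀ j : Fin n, (Fin.cons j (I ∘ ⇑σ) : Fin (k + 1) → Fin n)
      = (Fin.cons j I : Fin (k + 1) → Fin n) ∘ ⇑(Equiv.Perm.decomposeFin.symm (0, σ)) := by
    intro j; funext x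
    refine Fin.cases ?_ ?_ x
    · simp
    · intro i; simp
  have hsign : ((Equiv.Perm.sign (Equiv.Perm.decomposeFin.symm (0, σ)) : ℤˣ) : ℤ)
      = ((Equiv.Perm.sign σ : ℤˣ) : ℤ) := by
    rw [Equiv.Perm.decomposeFin.symm_sign, if_pos rfl, one_mul]
  have hterm : ∀ j : Fin n, ψ (Fin.cons j (I ∘ ⇑σ)) * P j
      = (Equiv.Perm.sign σ : ℤ) • (ψ (Fin.cons j I) * P j) := by
    intro j
    rw [hcons j, hψ (Fin.cons j I) (Equiv.Perm.decomposeFin.symm (0, σ)), hsign,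
      smul_mul_assoc]
  rw [Finset.sum_congr rfl fun j _ => hterm j, ← Finset.smul_sum, ← smul_neg]

lemma alt_sum_smul (k : ℕ) {ι : Type*} (s : Finset ι) (c : ι → ℂ)
    (f : ι → (Fin k → Fin n) → 𝒜) (hf : ∀ r, Alternating k (f r)) :
    Alternating k (fun I => ∑ r ∈ s, c r • f r I) := by
  intro I σ
  simp only
  have : ∀ r ∈ s, c r • f r (I ∘ ⇑σ)
      = (Equiv.Perm.sign σ : ℤ) • (c r • f r I) := by
    intro r _
    rw [hf r I σ, smul_comm]
  rw [Finset.sum_congr rfl this, ← Finset.smul_sum]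

/-! ### Linearity of the operators -/

lemma dK_zero_fun (X : Fin n → 𝒜) (k : ℕ) (I : Fin (k + 1) → Fin n) :
    dK X k (fun _ => (0 : 𝒜)) I = 0 := by simp [dK]

lemma dKstar_zero_fun (P : Fin n → 𝒜) (k : ℕ) (I : Fin k → Fin n) :
    dKstar P k (fun _ => (0 : 𝒜)) I = 0 := by simp [dKstar]

lemma dK_sum_smul (X : Fin n → 𝒜) (k : ℕ) {ι : Type*} (s : Finset ι) (c : ι → ℂ)
    (f : ι → (Fin k → Fin n) → 𝒜) (I : Fin (k + 1) → Fin n) :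
    dK X k (fun J => ∑ r ∈ s, c r • f r J) I = ∑ r ∈ s, c r • dK X k (f r) I := by
  simp only [dK, Finset.mul_sum, Finset.sum_mul, mul_smul_comm, smul_mul_assoc,
    ← Finset.sum_sub_distrib, ← smul_sub, Finset.smul_sum]
  rw [Finset.sum_comm]
  exact Finset.sum_congr rfl fun r _ => Finset.sum_congr rfl fun m _ => smul_comm _ _ _

lemma dKstar_sum_smul (P : Fin n → 𝒜) (k : ℕ) {ι : Type*} (s : Finset ι) (c : ι → ℂ)
    (f : ι → (Fin (k + 1) → Fin n) → 𝒜) (I : Fin k → Fin n) :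
    dKstar P k (fun J => ∑ r ∈ s, c r • f r J) I = ∑ r ∈ s, c r • dKstar P k (f r) I := by
  simp only [dKstar, Finset.sum_mul, smul_mul_assoc]
  rw [Finset.sum_comm, ← Finset.sum_neg_distrib]
  exact Finset.sum_congr rfl fun r _ => by rw [← Finset.smul_sum, ← smul_neg]

lemma degOp_sum {ι : Type*} (X P : Fin n → 𝒜) (s : Finset ι) (g : ι → 𝒜) :
    degOp X P (∑ r ∈ s, g r) = ∑ r ∈ s, degOp X P (g r) := by
  simp only [degOp, Finset.sum_mul, Finset.mul_sum, ← Finset.sum_sub_distrib]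
  exact Finset.sum_comm

/-! ### `degOp` of a commutator with `X j` -/

lemma degOp_comm (X P : Fin n → 𝒜)
    (hXP : ∀ i j, P i * X j - X j * P i = if i = j then 1 else 0)
    (hXX : ∀ i j, X i * X j = X j * X i) (j : Fin n) (D : 𝒜) :
    degOp X P (X j * D - D * X j)
      = X j * degOp X P D - degOp X P D * X j - (X j * D - D * X j) := by
  have step : ∀ i : Fin n, ((X j * D - D * X j) * X i - X i * (X j * D - D * X j)) * P i
      = X j * ((D * X i - X i * D) * P i) - ((D * X i - X i * D) * P i) * X j
        + (D * X i - X i * D) * (if i = j then 1 else 0) :=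
    fun i => termE (X j) (X i) (P i) D _ (hXX j i) (hXP i j)
  calc degOp X P (X j * D - D * X j)
      = ∑ i, (X j * ((D * X i - X i * D) * P i) - ((D * X i - X i * D) * P i) * X j
          + (D * X i - X i * D) * (if i = j then 1 else 0)) := by
        exact Finset.sum_congr rfl fun i _ => step i
    _ = (∑ i, (X j * ((D * X i - X i * D) * P i) - ((D * X i - X i * D) * P i) * X j))
          + ∑ i, (if i = j then D * X i - X i * D else 0) := by
        rw [Finset.sum_add_distrib]
        congr 1
        exact Finset.sum_congr rfl fun i _ => by rw [mul_ite, mul_one, mul_zero]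
    _ = X j * degOp X P D - degOp X P D * X j - (X j * D - D * X j) := by
        rw [Finset.sum_ite_eq' Finset.univ j (fun i => D * X i - X i * D),
          if_pos (Finset.mem_univ _), Finset.sum_sub_distrib, ← Finset.mul_sum,
          ← Finset.sum_mul, degOp]
        abel

/-! ### Spectral theory of `degOp` through the projections `π` -/

section Proj
variable (X P : Fin n → 𝒜) (π : ℕ → 𝒜 →ₗ[ℂ] 𝒜)

lemma sum_proj (hπ_sum : ∀ a : 𝒜, ∑ᶠ r, π r a = a) (a : 𝒜) (N : ℕ)
    (h : ∀ r, N < r → π r a = 0) :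
    ∑ r ∈ Finset.range (N + 1), π r a = a := by
  have hs : Function.support (fun r => π r a) ⊆ ↑(Finset.range (N + 1)) := by
    intro r hr
    simp only [Finset.coe_range, Set.mem_Iio]
    by_contra hc
    exact hr (h r (by omega))
  rw [← finsum_eq_finset_sum_of_support_subset _ hs, hπ_sum a]

variable (hπ_fin : ∀ a : 𝒜, ∃ N, ∀ r > N, π r a = 0)
    (hπ_sum : ∀ a : 𝒜, ∑ᶠ r, π r a = a)
    (hπ_orth : ∀ r s (a : 𝒜), π r (π s a) = if r = s then π s a else 0)
    (hπ_deg : ∀ r (a : 𝒜), degOp X P (π r a) = r • π r a)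

include hπ_fin hπ_sum hπ_orth hπ_deg

lemma pi_degOp (s : ℕ) (a : 𝒜) : π s (degOp X P a) = s • π s a := by
  obtain ⟨N, hN⟩ := hπ_fin a
  set N' := max N s with hN'
  have ha : ∑ r ∈ Finset.range (N' + 1), π r a = a :=
    sum_proj π hπ_sum a N' (fun r hr => hN r (by omega))
  conv_lhs => rw [← ha]
  rw [degOp_sum, map_sum]
  have : ∀ r, π s (degOp X P (π r a)) = r • (if s = r then π r a else 0) := by
    intro r
    rw [hπ_deg r a, map_nsmul, hπ_orth s r a]
  rw [Finset.sum_congr rfl fun r _ => this r]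
  rw [Finset.sum_eq_single_of_mem s (Finset.mem_range.mpr (by omega))
    (fun r _ hr => by rw [if_neg (Ne.symm hr), smul_zero]), if_pos rfl]

lemma eig_proj (b : 𝒜) (t : ℕ) (hb : degOp X P b = t • b) :
    (∀ r, r ≠ t → π r b = 0) ∧ π t b = b := by
  have hvanish : ∀ r, r ≠ t → π r b = 0 := by
    intro r hr
    have h1 : (r : ℕ) • π r b = (t : ℕ) • π r b := by
      rw [← pi_degOp X P π hπ_fin hπ_sum hπ_orth hπ_deg r b, hb, map_nsmul]
    have h2 : ((r : ℂ) - (t : ℂ)) • π r b = 0 := by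
      rw [sub_smul, Nat.cast_smul_eq_nsmul, Nat.cast_smul_eq_nsmul, h1, sub_self]
    rcases smul_eq_zero.mp h2 with h | h
    · exact absurd (by exact_mod_cast sub_eq_zero.mp h) hr
    · exact h
  refine ⟨hvanish, ?_⟩
  obtain ⟨N, hN⟩ := hπ_fin b
  set N' := max N t
  have hb' : ∑ r ∈ Finset.range (N' + 1), π r b = b :=
    sum_proj π hπ_sum b N' (fun r hr => hN r (by omega))
  calc π t b = ∑ r ∈ Finset.range (N' + 1), π r b := by
        rw [Finset.sum_eq_single_of_mem t (Finset.mem_range.mpr (by omega))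
          (fun r _ hr => hvanish r hr)]
    _ = b := hb'

lemma eig_neg (b : 𝒜) (hb : degOp X P b = -b) : b = 0 := by
  have hvanish : ∀ r, π r b = 0 := by
    intro r
    have h1 : (r : ℕ) • π r b = -(π r b) := by
      rw [← pi_degOp X P π hπ_fin hπ_sum hπ_orth hπ_deg r b, hb, map_neg]
    have h2 : ((r : ℂ) + 1) • π r b = 0 := by
      rw [add_smul, Nat.cast_smul_eq_nsmul, h1, one_smul, neg_add_cancel]
    rcases smul_eq_zero.mp h2 with h | h
    · exact absurd h (by exact_mod_cast Nat.succ_ne_zero r)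
    · exact h
  obtain ⟨N, hN⟩ := hπ_fin b
  rw [← sum_proj π hπ_sum b N (fun r hr => hN r hr)]
  exact Finset.sum_eq_zero fun r _ => hvanish r

variable (hXP : ∀ i j, P i * X j - X j * P i = if i = j then 1 else 0)
    (hXX : ∀ i j, X i * X j = X j * X i)

include hXP hXX

lemma comm_pi_zero (j : Fin n) (a : 𝒜) : X j * π 0 a - π 0 a * X j = 0 := by
  apply eig_neg X P π hπ_fin hπ_sum hπ_orth hπ_deg
  rw [degOp_comm X P hXP hXX j (π 0 a), hπ_deg 0 a, zero_smul]
  simp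

lemma pi_comm (j : Fin n) (r : ℕ) (a : 𝒜) :
    π r (X j * a - a * X j) = X j * π (r + 1) a - π (r + 1) a * X j := by
  obtain ⟨N, hN⟩ := hπ_fin a
  set N' := max N (r + 1) with hN'
  have ha : ∑ s ∈ Finset.range (N' + 1), π s a = a :=
    sum_proj π hπ_sum a N' (fun s hs => hN s (by omega))
  have expand : X j * a - a * X j
      = ∑ s ∈ Finset.range (N' + 1), (X j * π s a - π s a * X j) := by
    conv_lhs => rw [← ha]
    rw [Finset.mul_sum, Finset.sum_mul, ← Finset.sum_sub_distrib]
  have heig : ∀ u : ℕ, degOp X P (X j * π (u + 1) a - π (u + 1) a * X j)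
      = u • (X j * π (u + 1) a - π (u + 1) a * X j) := by
    intro u
    rw [degOp_comm X P hXP hXX j (π (u + 1) a), hπ_deg (u + 1) a,
      mul_smul_comm, smul_mul_assoc, ← smul_sub, succ_nsmul, add_sub_cancel_right]
  rw [expand, map_sum]
  rw [Finset.sum_eq_single_of_mem (r + 1) (Finset.mem_range.mpr (by omega)) ?side]
  · exact (eig_proj X P π hπ_fin hπ_sum hπ_orth hπ_deg _ r (heig r)).2
  case side =>
    intro s _ hsne
    cases s with
    | zero =>
        rw [comm_pi_zero X P π hπ_fin hπ_sum hπ_orth hπ_deg hXP hXX j a]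
        exact map_zero _
    | succ u =>
        exact (eig_proj X P π hπ_fin hπ_sum hπ_orth hπ_deg _ u (heig u)).1 r
          (fun hru => hsne (by omega))

lemma pi_dK (k : ℕ) (ψ : (Fin k → Fin n) → 𝒜) (I : Fin (k + 1) → Fin n) (r : ℕ) :
    π r (dK X k ψ I) = dK X k (fun J => π (r + 1) (ψ J)) I := by
  simp only [dK]
  rw [map_sum]
  exact Finset.sum_congr rfl fun m _ => by
    rw [map_zsmul, pi_comm X P π hπ_fin hπ_sum hπ_orth hπ_deg hXP hXX]

lemma dK_pi_zero (k : ℕ) (ψ : (Fin k → Fin n) → 𝒜) (I : Fin (k + 1) → Fin n) :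
    dK X k (fun J => π 0 (ψ J)) I = 0 := by
  simp only [dK]
  refine Finset.sum_eq_zero fun m _ => ?_
  rw [comm_pi_zero X P π hπ_fin hπ_sum hπ_orth hπ_deg hXP hXX, smul_zero]

end Proj

/-! ### `dKinv` as a finite sum -/

lemma dKinv_eq_sum (P : Fin n → 𝒜) (π : ℕ → 𝒜 →ₗ[ℂ] 𝒜) (k : ℕ)
    (ψ : (Fin (k + 1) → Fin n) → 𝒜) (I : Fin k → Fin n) (N : ℕ)
    (h : ∀ (J : Fin (k + 1) → Fin n) (r : ℕ), N < r → π r (ψ J) = 0) :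
    dKinv P π k ψ I = ∑ r ∈ Finset.range (N + 1),
      ((k + 1 + r : ℕ) : ℂ)⁻¹ • dKstar P k (fun J => π r (ψ J)) I := by
  apply finsum_eq_finset_sum_of_support_subset
  intro r hr
  simp only [Finset.coe_range, Set.mem_Iio]
  by_contra hc
  apply hr
  have hz : (fun J => π r (ψ J)) = fun _ : Fin (k + 1) → Fin n => (0 : 𝒜) :=
    funext fun J => h J r (by omega)
  simp only [hz, dKstar_zero_fun, smul_zero]

/-- With `(δ_K^{-1})^k = (k+r)⁻¹ (δ_K^*)^k` on the component of values of
`V`-degree `r`, one has `δ_K^{k-1}∘(δ_K^{-1})^k + (δ_K^{-1})^{k+1}∘δ_K^k = id` for all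
`k ≥ 1`; hence the cohomology of `Hom_{A^e}(K_•, Diffop(V×G))` vanishes in degrees `k ≥ 1`.
The degree decomposition of `Diffop(V×G)` is encoded by the projections `π_r` onto the
homogeneous components (`π_r` idempotent, mutually orthogonal, summing to the identity, with
`deg = ∑_r r·π_r` in the sense that `degOp (π_r a) = r • π_r a`). -/
theorem koszul_cohomology_vanishes
    (X P : Fin n → 𝒜)
    (hXP : ∀ i j, P i * X j - X j * P i = if i = j then 1 else 0)
    (hPP : ∀ i j, P i * P j = P j * P i)
    (hXX : ∀ i j, X i * X j = X j * X i)
    (π : ℕ → 𝒜 →ₗ[ℂ] 𝒜)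
    (hπ_fin : ∀ a : 𝒜, ∃ N, ∀ r > N, π r a = 0)
    (hπ_sum : ∀ a : 𝒜, ∑ᶠ r, π r a = a)
    (hπ_orth : ∀ r s (a : 𝒜), π r (π s a) = if r = s then π s a else 0)
    (hπ_deg : ∀ r (a : 𝒜), degOp X P (π r a) = r • π r a)
    (k : ℕ) (ψ : (Fin (k + 1) → Fin n) → 𝒜) (hψ : Alternating (k + 1) ψ) :
    -- the homotopy identity (on cochains of degree k+1 ≥ 1)
    (∀ I : Fin (k + 1) → Fin n,
      dK X k (dKinv P π k ψ) I + dKinv P π (k + 1) (dK X (k + 1) ψ) I = ψ I) ∧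
    -- hence closed cochains in degree k+1 ≥ 1 are exact
    ((∀ I, dK X (k + 1) ψ I = 0) →
      ∃ φ : (Fin k → Fin n) → 𝒜, Alternating k φ ∧ ∀ I, dK X k φ I = ψ I) := by
  classical
  -- a uniform bound on the degrees appearing in the values of ψ
  choose f hf using fun J : Fin (k + 1) → Fin n => hπ_fin (ψ J)
  set N := Finset.univ.sup f with hNdef
  have hN : ∀ (J : Fin (k + 1) → Fin n) (r : ℕ), N < r → π r (ψ J) = 0 := by
    intro J r hr
    exact hf J r (lt_of_le_of_lt (Finset.le_sup (Finset.mem_univ J)) hr)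
  have hfun : dKinv P π k ψ = fun J => ∑ r ∈ Finset.range (N + 1),
      ((k + 1 + r : ℕ) : ℂ)⁻¹ • dKstar P k (fun J' => π r (ψ J')) J :=
    funext fun J => dKinv_eq_sum P π k ψ J N hN
  have main : ∀ I : Fin (k + 1) → Fin n,
      dK X k (dKinv P π k ψ) I + dKinv P π (k + 1) (dK X (k + 1) ψ) I = ψ I := by
    intro I
    have first : dK X k (dKinv P π k ψ) I
        = ∑ r ∈ Finset.range (N + 1), ((k + 1 + r : ℕ) : ℂ)⁻¹ •
            dK X k (dKstar P k (fun J' => π r (ψ J'))) I := by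
      rw [hfun]
      exact dK_sum_smul X k _ _ _ I
    have hb2 : ∀ (J : Fin (k + 1 + 1) → Fin n) (r : ℕ), N < r →
        π r (dK X (k + 1) ψ J) = 0 := by
      intro J r hr
      rw [pi_dK X P π hπ_fin hπ_sum hπ_orth hπ_deg hXP hXX (k + 1) ψ J r]
      have hz : (fun J' => π (r + 1) (ψ J')) = fun _ : Fin (k + 1) → Fin n => (0 : 𝒜) :=
        funext fun J' => hN J' (r + 1) (by omega)
      rw [hz, dK_zero_fun]
    have second0 : dKinv P π (k + 1) (dK X (k + 1) ψ) I
        = ∑ r ∈ Finset.range (N + 1), ((k + 1 + 1 + r : ℕ) : ℂ)⁻¹ •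
            dKstar P (k + 1) (fun J => π r (dK X (k + 1) ψ J)) I :=
      dKinv_eq_sum P π (k + 1) (dK X (k + 1) ψ) I N hb2
    set F : ℕ → 𝒜 := fun r => ((k + 1 + r : ℕ) : ℂ)⁻¹ •
        dKstar P (k + 1) (dK X (k + 1) (fun J => π r (ψ J))) I with hF
    have second : dKinv P π (k + 1) (dK X (k + 1) ψ) I
        = ∑ r ∈ Finset.range (N + 1), F r := by
      rw [second0]
      have hterm : ∀ r : ℕ, ((k + 1 + 1 + r : ℕ) : ℂ)⁻¹ •
          dKstar P (k + 1) (fun J => π r (dK X (k + 1) ψ J)) I = F (r + 1) := by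
        intro r
        have h1 : (fun J => π r (dK X (k + 1) ψ J))
            = dK X (k + 1) (fun J => π (r + 1) (ψ J)) :=
          funext fun J => pi_dK X P π hπ_fin hπ_sum hπ_orth hπ_deg hXP hXX (k + 1) ψ J r
        have h2 : k + 1 + 1 + r = k + 1 + (r + 1) := by omega
        rw [h1, hF, h2]
      rw [Finset.sum_congr rfl fun r _ => hterm r]
      have hF0 : F 0 = 0 := by
        have hz : dK X (k + 1) (fun J => π 0 (ψ J)) = fun _ : Fin (k + 1 + 1) → Fin n => (0 : 𝒜) :=
          funext fun J => dK_pi_zero X P π hπ_fin hπ_sum hπ_orth hπ_deg hXP hXX (k + 1) ψ J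
        rw [hF]
        simp only [hz, dKstar_zero_fun, smul_zero]
      have hFN : F (N + 1) = 0 := by
        have hz : (fun J => π (N + 1) (ψ J)) = fun _ : Fin (k + 1) → Fin n => (0 : 𝒜) :=
          funext fun J => hN J (N + 1) (by omega)
        rw [hF]
        simp only [hz]
        rw [show dK X (k + 1) (fun _ : Fin (k + 1) → Fin n => (0 : 𝒜))
            = fun I' : Fin (k + 1 + 1) → Fin n => (0 : 𝒜) from
          funext fun I' => dK_zero_fun X (k + 1) I', dKstar_zero_fun, smul_zero]
      calc ∑ r ∈ Finset.range (N + 1), F (r + 1)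
          = ∑ r ∈ Finset.range (N + 1 + 1), F r := by
            rw [Finset.sum_range_succ' F (N + 1), hF0, add_zero]
        _ = ∑ r ∈ Finset.range (N + 1), F r := by
            rw [Finset.sum_range_succ, hFN, add_zero]
    rw [first, second, ← Finset.sum_add_distrib]
    have hterm2 : ∀ r ∈ Finset.range (N + 1),
        ((k + 1 + r : ℕ) : ℂ)⁻¹ • dK X k (dKstar P k (fun J' => π r (ψ J'))) I + F r
          = π r (ψ I) := by
      intro r _
      rw [hF, ← smul_add,
        homotopy_raw X P hXP k (fun J => π r (ψ J)) (alt_pi π (k + 1) ψ hψ r) I,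
        hπ_deg r (ψ I), ← add_nsmul, show r + (k + 1) = k + 1 + r from by omega,
        ← Nat.cast_smul_eq_nsmul ℂ, smul_smul,
        inv_mul_cancel₀ (Nat.cast_ne_zero.mpr (by omega : k + 1 + r ≠ 0)), one_smul]
    rw [Finset.sum_congr rfl hterm2]
    exact sum_proj π hπ_sum (ψ I) N (fun r hr => hN I r hr)
  refine ⟨main, fun hclosed => ?_⟩
  refine ⟨dKinv P π k ψ, ?_, ?_⟩
  · rw [hfun]
    exact alt_sum_smul k _ _ _
      (fun r => alt_dKstar P k (fun J => π r (ψ J)) (alt_pi π (k + 1) ψ hψ r))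
  · intro I
    have h2 : dKinv P π (k + 1) (dK X (k + 1) ψ) I = 0 := by
      have hz : dK X (k + 1) ψ = fun _ : Fin (k + 1 + 1) → Fin n => (0 : 𝒜) :=
        funext fun I' => hclosed I'
      rw [hz]
      simp [dKinv, dKstar]
    have := main I
    rwa [h2, add_zero] at this

end KoszulHomotopyDeg
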